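/- Let D be a finite set of binary strings of length N, and let f_0, f_1, …, f_k : D → E be functions with Gram matrices F_0, F_1, …, F_k. Suppose that for each i ∈ {1,…,k} there is a feasible solution for γ(F_{i−1} − F_i) with cost function c_i. Then there is a feasible solution for γ(F_0 − F_k) whose cost function c satisfies c(x) ≤ ∑_{i=1}^k c_i(x) for all x ∈ D. -/

import Mathlib

open Finset

/-- A feasible solution for the filtered γ₂-norm SDP `γ(A)` on domain `D ⊆ {0,1}^N`,
with cost function `c`. -/
def GammaFeasible {N : ℕ} (D : Finset (Fin N → Bool))
    (A : (Fin N → Bool) → (Fin N → Bool) → ℝ)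
    (c : (Fin N → Bool) → ℝ) : Prop :=
  ∃ (d : ℕ) (u v : (Fin N → Bool) → Fin N → EuclideanSpace ℂ (Fin d)),
    (∀ x ∈ D, ∀ y ∈ D,
      ∑ j ∈ Finset.univ.filter (fun j => x j ≠ y j),
        (inner ℂ (u x j) (v y j) : ℂ) = (A x y : ℂ)) ∧
    (∀ x ∈ D, c x = max (∑ j, ‖u x j‖ ^ 2) (∑ j, ‖v x j‖ ^ 2))

/-- The Gram matrix of a function `f`. -/
def Gram {N : ℕ} {E : Type*} [DecidableEq E] (f : (Fin N → Bool) → E) :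
    (Fin N → Bool) → (Fin N → Bool) → ℝ :=
  fun x y => if f x = f y then 1 else 0

namespace GammaAux

noncomputable def app {d1 d2 : ℕ} (a : EuclideanSpace ℂ (Fin d1))
    (b : EuclideanSpace ℂ (Fin d2)) : EuclideanSpace ℂ (Fin (d1 + d2)) :=
  WithLp.toLp 2 (fun i : Fin (d1 + d2) => (Fin.addCases (fun j => a j) (fun j => b j) i : ℂ))

lemma inner_app {d1 d2 : ℕ} (a a' : EuclideanSpace ℂ (Fin d1))
    (b b' : EuclideanSpace ℂ (Fin d2)) :
    (inner ℂ (app a b) (app a' b') : ℂ) = inner ℂ a a' + inner ℂ b b' := by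
  simp [app, PiLp.inner_apply, Fin.sum_univ_add]

lemma norm_app_sq {d1 d2 : ℕ} (a : EuclideanSpace ℂ (Fin d1))
    (b : EuclideanSpace ℂ (Fin d2)) :
    ‖app a b‖ ^ 2 = ‖a‖ ^ 2 + ‖b‖ ^ 2 := by
  have h1 := norm_sq_eq_re_inner (𝕜 := ℂ) (app a b)
  have h2 := norm_sq_eq_re_inner (𝕜 := ℂ) a
  have h3 := norm_sq_eq_re_inner (𝕜 := ℂ) b
  rw [h1, h2, h3, inner_app, map_add]

lemma feasible_congr {N : ℕ} {D : Finset (Fin N → Bool)} {A B c}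
    (hAB : ∀ x y, A x y = B x y) (hA : GammaFeasible D A c) :
    GammaFeasible D B c := by
  have : A = B := by funext x y; exact hAB x y
  rwa [← this]

lemma feasible_zero {N : ℕ} (D : Finset (Fin N → Bool)) :
    GammaFeasible D (fun _ _ => 0) (fun _ => 0) := by
  refine ⟨0, fun _ _ => 0, fun _ _ => 0, ?_, ?_⟩
  · intro x _ y _; simp
  · intro x _; simp

lemma feasible_add {N : ℕ} {D : Finset (Fin N → Bool)} {A B cA cB}
    (hA : GammaFeasible D A cA) (hB : GammaFeasible D B cB) :
    ∃ cc, GammaFeasible D (fun x y => A x y + B x y) cc ∧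
      ∀ x ∈ D, cc x ≤ cA x + cB x := by
  obtain ⟨d1, u1, v1, h1, hc1⟩ := hA
  obtain ⟨d2, u2, v2, h2, hc2⟩ := hB
  refine ⟨fun x => max (∑ j, ‖app (u1 x j) (u2 x j)‖ ^ 2)
      (∑ j, ‖app (v1 x j) (v2 x j)‖ ^ 2),
    ⟨d1 + d2, fun x j => app (u1 x j) (u2 x j), fun x j => app (v1 x j) (v2 x j),
      ?_, ?_⟩, ?_⟩
  · intro x hx y hy
    push_cast
    rw [← h1 x hx y hy, ← h2 x hx y hy, ← Finset.sum_add_distrib]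
    exact Finset.sum_congr rfl fun j _ => inner_app _ _ _ _
  · intro x _; rfl
  · intro x hx
    rw [hc1 x hx, hc2 x hx]
    simp only [norm_app_sq, Finset.sum_add_distrib]
    exact max_le (add_le_add (le_max_left _ _) (le_max_left _ _))
      (add_le_add (le_max_right _ _) (le_max_right _ _))

end GammaAux

theorem gamma_composition {N k : ℕ} {E : Type*} [DecidableEq E] (D : Finset (Fin N → Bool))
    (f : Fin (k + 1) → (Fin N → Bool) → E)
    (c : Fin k → (Fin N → Bool) → ℝ)
    (h : ∀ i : Fin k,
      GammaFeasible D (fun x y => Gram (f i.castSucc) x y - Gram (f i.succ) x y) (c i)) :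
    ∃ cc : (Fin N → Bool) → ℝ,
      GammaFeasible D (fun x y => Gram (f 0) x y - Gram (f (Fin.last k)) x y) cc ∧
      ∀ x ∈ D, cc x ≤ ∑ i, c i x := by
  induction k with
  | zero =>
    refine ⟨fun _ => 0, ?_, ?_⟩
    · apply GammaAux.feasible_congr (A := fun _ _ => (0:ℝ))
      · intro x y
        have : (0 : Fin 1) = Fin.last 0 := rfl
        rw [this]; ring
      · exact GammaAux.feasible_zero D
    · intro x _; simp
  | succ k ih =>
    obtain ⟨cc1, hcc1, hle1⟩ := ih (fun i => f i.castSucc) (fun i => c i.castSucc)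
      (fun i => by
        have := h i.castSucc
        apply GammaAux.feasible_congr (hA := this)
        intro x y
        rw [Fin.succ_castSucc])
    obtain ⟨cc, hcc, hle⟩ := GammaAux.feasible_add hcc1 (h (Fin.last k))
    refine ⟨cc, ?_, ?_⟩
    · apply GammaAux.feasible_congr (hA := hcc)
      intro x y
      have h1 : (Fin.castSucc (0 : Fin (k+1))) = 0 := Fin.castSucc_zero
      have h2 : (Fin.last k).succ = Fin.last (k + 1) := Fin.succ_last k
      rw [h1, h2]; ring
    · intro x hx
      calc cc x ≤ cc1 x + c (Fin.last k) x := hle x hx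
        _ ≤ (∑ i : Fin k, c i.castSucc x) + c (Fin.last k) x := by
            exact add_le_add_left (hle1 x hx) _
        _ = ∑ i, c i x := by rw [Fin.sum_univ_castSucc]
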